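/- Let L be an n-dimensional complex vector space with basis y₁,…,yₙ (n ≥ 4) equipped with the bilinear bracket defined by [yᵢ,y₁] = y_{i+1} for 1 ≤ i ≤ n-2, [yᵢ,yₙ] = y_{k+i-1} for 1 ≤ i ≤ n-k, where 3 ≤ k ≤ n-1, and all other products of basis vectors equal to zero. Then L is a Leibniz algebra, i.e., the bracket satisfies [x,[y,z]] = [[x,y],z] - [[x,z],y]. -/
import Mathlib


/-- The algebra M₁(k): basis y₁,…,yₙ (n ≥ 4), [yᵢ,y₁] = y_{i+1} for 1 ≤ i ≤ n-2,
[yᵢ,yₙ] = y_{k+i-1} for 1 ≤ i ≤ n-k (3 ≤ k ≤ n-1), all other products of basis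
vectors zero.  This bracket satisfies the Leibniz identity. -/
theorem M1k_is_Leibniz
    (n k : ℕ) (hn : 4 ≤ n) (hk3 : 3 ≤ k) (hkn : k ≤ n - 1)
    (V : Type*) [AddCommGroup V] [Module ℂ V]
    (y : ℕ → V)
    (hindep : LinearIndependent ℂ (fun i : Fin n => y (i.val + 1)))
    (hspan : Submodule.span ℂ (Set.range (fun i : Fin n => y (i.val + 1))) = ⊤)
    (B : V →ₗ[ℂ] V →ₗ[ℂ] V)
    (h1 : ∀ i, 1 ≤ i → i ≤ n - 2 → B (y i) (y 1) = y (i + 1))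
    (h2 : ∀ i, 1 ≤ i → i ≤ n - k → B (y i) (y n) = y (k + i - 1))
    (h0 : ∀ i j, 1 ≤ i → i ≤ n → 1 ≤ j → j ≤ n →
      ¬(j = 1 ∧ i ≤ n - 2) → ¬(j = n ∧ i ≤ n - k) → B (y i) (y j) = 0) :
    ∀ x u z : V, B x (B u z) = B (B x u) z - B (B x z) u := by
  have hzero : ∀ i c, 1 ≤ i → i ≤ n → 1 ≤ c → c ≤ n → c ≠ 1 → c ≠ n →
      B (y i) (y c) = 0 := fun i c hi hi' hc hc' hc1 hcn =>
    h0 i c hi hi' hc hc' (fun h => hc1 h.1) (fun h => hcn h.1)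
  -- any product of two basis vectors is 0 or a basis vector yₘ with 2 ≤ m ≤ n-1
  have inner : ∀ b c, 1 ≤ b → b ≤ n → 1 ≤ c → c ≤ n →
      B (y b) (y c) = 0 ∨ ∃ m, 2 ≤ m ∧ m ≤ n - 1 ∧ B (y b) (y c) = y m := by
    intro b c hb hb' hc hc'
    by_cases hc1 : c = 1
    · subst hc1
      by_cases hb2 : b ≤ n - 2
      · exact Or.inr ⟨b + 1, by omega, by omega, h1 b hb hb2⟩
      · exact Or.inl (h0 b 1 hb hb' le_rfl (by omega) (fun h => hb2 h.2)
          (fun h => by omega))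
    · by_cases hcn : c = n
      · rw [hcn]
        by_cases hbk : b ≤ n - k
        · exact Or.inr ⟨k + b - 1, by omega, by omega, h2 b hb hbk⟩
        · exact Or.inl (h0 b n hb hb' (by omega) le_rfl (fun h => by omega) (fun h => hbk h.2))
      · exact Or.inl (hzero b c hb hb' hc hc' hc1 hcn)
  -- second-level products with a non-special last slot vanish
  have Tz : ∀ a b c, 1 ≤ a → a ≤ n → 1 ≤ b → b ≤ n → 1 ≤ c → c ≤ n → c ≠ 1 → c ≠ n →
      B (B (y a) (y b)) (y c) = 0 := by
    intro a b c ha ha' hb hb' hc hc' hc1 hcn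
    rcases inner a b ha ha' hb hb' with h | ⟨m, hm2, hm1, hm⟩
    · rw [h]; simp
    · rw [hm]; exact hzero m c (by omega) (by omega) hc hc' hc1 hcn
  have Tz2 : ∀ a b c, 1 ≤ a → a ≤ n → 1 ≤ b → b ≤ n → b ≠ 1 → b ≠ n →
      B (B (y a) (y b)) (y c) = 0 := by
    intro a b c ha ha' hb hb' hb1 hbn
    rw [hzero a b ha ha' hb hb' hb1 hbn]; simp
  -- the crucial swap in the (1, n) slots
  have Tswap : ∀ a, 1 ≤ a → a ≤ n →
      B (B (y a) (y 1)) (y n) = B (B (y a) (y n)) (y 1) := by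
    intro a ha ha'
    by_cases hA : a + k + 1 ≤ n
    · -- a ≤ n - k - 1 : both sides equal y (k + a)
      rw [h1 a ha (by omega), h2 (a + 1) (by omega) (by omega),
        h2 a ha (by omega), h1 (k + a - 1) (by omega) (by omega)]
      congr 1; omega
    · by_cases hB : a ≤ n - k
      · -- a = n - k : both sides vanish
        rw [h1 a ha (by omega), h2 a ha hB,
          h0 (a + 1) n (by omega) (by omega) (by omega) le_rfl (by omega) (by omega),
          h0 (k + a - 1) 1 (by omega) (by omega) le_rfl (by omega) (by omega) (by omega)]
      · -- a > n - k
        rw [h0 a n ha ha' (by omega) le_rfl (by omega) (fun h => hB h.2)]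
        by_cases hC : a ≤ n - 2
        · rw [h1 a ha hC,
            h0 (a + 1) n (by omega) (by omega) (by omega) le_rfl (by omega) (by omega)]
          simp
        · rw [h0 a 1 ha ha' le_rfl (by omega) (fun h => hC h.2) (by omega)]
          simp
    -- the symmetry of the double product in the last two slots
  have Tsym : ∀ a b c, 1 ≤ a → a ≤ n → 1 ≤ b → b ≤ n → 1 ≤ c → c ≤ n →
      B (B (y a) (y b)) (y c) = B (B (y a) (y c)) (y b) := by
    intro a b c ha ha' hb hb' hc hc'
    by_cases hb1 : b = 1
    · subst hb1
      by_cases hc1 : c = 1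
      · subst hc1; rfl
      · by_cases hcn : c = n
        · rw [hcn]; exact Tswap a ha ha'
        · rw [Tz a 1 c ha ha' hb hb' hc hc' hc1 hcn,
            Tz2 a c 1 ha ha' hc hc' hc1 hcn]
    · by_cases hbn : b = n
      · by_cases hc1 : c = 1
        · rw [hbn, hc1]; exact (Tswap a ha ha').symm
        · by_cases hcn : c = n
          · rw [hbn, hcn]
          · rw [hbn, Tz a n c ha ha' (by omega) le_rfl hc hc' hc1 hcn,
              Tz2 a c n ha ha' hc hc' hc1 hcn]
      · rw [Tz2 a b c ha ha' hb hb' hb1 hbn,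
          Tz a c b ha ha' hc hc' hb hb' hb1 hbn]
  -- the Leibniz identity on basis vectors
  have key : ∀ a b c, 1 ≤ a → a ≤ n → 1 ≤ b → b ≤ n → 1 ≤ c → c ≤ n →
      B (y a) (B (y b) (y c)) = B (B (y a) (y b)) (y c) - B (B (y a) (y c)) (y b) := by
    intro a b c ha ha' hb hb' hc hc'
    have lhs0 : B (y a) (B (y b) (y c)) = 0 := by
      rcases inner b c hb hb' hc hc' with h | ⟨m, hm2, hm1, hm⟩
      · rw [h]; simp
      · rw [hm]; exact hzero a m ha ha' (by omega) (by omega) (by omega) (by omega)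
    rw [lhs0, Tsym a b c ha ha' hb hb' hc hc', sub_self]
  have mem : ∀ v : V, v ∈ Submodule.span ℂ
      (Set.range fun i : Fin n => y (i.val + 1)) := fun v => hspan ▸ Submodule.mem_top
  -- generalize the first slot
  have keyB : ∀ b c, 1 ≤ b → b ≤ n → 1 ≤ c → c ≤ n → ∀ x : V,
      B x (B (y b) (y c)) = B (B x (y b)) (y c) - B (B x (y c)) (y b) := by
    intro b c hb hb' hc hc' x
    refine Submodule.span_induction ?_ ?_ ?_ ?_ (mem x)
    · rintro w ⟨i, rfl⟩
      exact key (i.val + 1) b c (by omega) (Nat.succ_le_of_lt i.isLt) hb hb' hc hc'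
    · simp
    · intro x1 x2 _ _ hx1 hx2
      simp only [map_add, LinearMap.add_apply, hx1, hx2]
      abel
    · intro r x1 _ hx1
      simp only [map_smul, LinearMap.smul_apply, hx1, smul_sub]
  -- generalize the second slot
  have keyC : ∀ c, 1 ≤ c → c ≤ n → ∀ x u : V,
      B x (B u (y c)) = B (B x u) (y c) - B (B x (y c)) u := by
    intro c hc hc' x u
    refine Submodule.span_induction ?_ ?_ ?_ ?_ (mem u)
    · rintro w ⟨i, rfl⟩
      exact keyB (i.val + 1) c (by omega) (Nat.succ_le_of_lt i.isLt) hc hc' x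
    · simp
    · intro u1 u2 _ _ hu1 hu2
      simp only [map_add, LinearMap.add_apply, hu1, hu2]
      abel
    · intro r u1 _ hu1
      simp only [map_smul, LinearMap.smul_apply, hu1, smul_sub]
  -- generalize the third slot
  intro x u z
  refine Submodule.span_induction ?_ ?_ ?_ ?_ (mem z)
  · rintro w ⟨i, rfl⟩
    exact keyC (i.val + 1) (by omega) (Nat.succ_le_of_lt i.isLt) x u
  · simp
  · intro z1 z2 _ _ hz1 hz2
    simp only [map_add, LinearMap.add_apply, hz1, hz2]
    abel
  · intro r z1 _ hz1
    simp only [map_smul, LinearMap.smul_apply, hz1, smul_sub]
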